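/- Let R and S be orthogonal projections on a real Hilbert space H with ker(R) ∩ ker(S) = {0}, let r ∈ ran(R), s ∈ ran(S), and let f₀ be the minimizer of ‖Sf − s‖ subject to Rf = r, and f₁ the minimizer of ‖Rf − r‖ subject to Sf = s. Then R(f₀ − f₁) = S(f₀ − f₁) = f₀ − f₁. -/

import Mathlib

open scoped RealInnerProductSpace

lemma aux_inner_zero {H : Type*} [NormedAddCommGroup H] [InnerProductSpace ℝ H]
    (x y : H) (h : ∀ t : ℝ, ‖x‖ ≤ ‖x + t • y‖) : ⟪x, y⟫ = 0 := by
  by_cases hy : y = 0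
  · simp [hy]
  · have hN : (0:ℝ) < ‖y‖^2 := pow_pos (norm_pos_iff.mpr hy) 2
    have key : ∀ t : ℝ, 0 ≤ 2*(t*⟪x, y⟫) + t^2*‖y‖^2 := by
      intro t
      have h1 := h t
      have h2 : ‖x‖^2 ≤ ‖x + t • y‖^2 := by
        have := norm_nonneg x
        nlinarith [norm_nonneg (x + t • y)]
      have h3 : ‖x + t • y‖^2 = ‖x‖^2 + 2*(t*⟪x, y⟫) + ‖t • y‖^2 := by
        rw [@norm_add_sq_real, inner_smul_right]
      have h4 : ‖t • y‖^2 = t^2 * ‖y‖^2 := by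
        rw [norm_smul]; simp [mul_pow, sq_abs]
      nlinarith
    have h7 := key (-⟪x, y⟫/‖y‖^2)
    have hN' : ‖y‖^2 ≠ 0 := ne_of_gt hN
    have h8 : 2*((-⟪x, y⟫/‖y‖^2)*⟪x, y⟫) + (-⟪x, y⟫/‖y‖^2)^2*‖y‖^2
        = -(⟪x, y⟫^2/‖y‖^2) := by
      field_simp
      ring
    rw [h8] at h7
    have h9 : ⟪x, y⟫^2/‖y‖^2 = 0 :=
      le_antisymm (by linarith) (div_nonneg (sq_nonneg _) hN.le)
    field_simp at h9
    simpa using h9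

/-- For orthogonal projections `R, S` with trivial common kernel, the interpolants
`f₀` and `f₁` satisfy `R(f₀ - f₁) = S(f₀ - f₁) = f₀ - f₁`. -/
theorem stmt_3
    {H : Type*} [NormedAddCommGroup H] [InnerProductSpace ℝ H] [CompleteSpace H]
    (R S : H →L[ℝ] H)
    (hR : IsSelfAdjoint R) (hRi : R ∘L R = R)
    (hS : IsSelfAdjoint S) (hSi : S ∘L S = S)
    (hker : LinearMap.ker (R : H →ₗ[ℝ] H) ⊓ LinearMap.ker (S : H →ₗ[ℝ] H) = ⊥)
    (r s : H) (hr : r ∈ LinearMap.range (R : H →ₗ[ℝ] H)) (hs : s ∈ LinearMap.range (S : H →ₗ[ℝ] H))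
    (f₀ f₁ : H)
    (hf₀ : R f₀ = r ∧ IsMinOn (fun f : H => ‖S f - s‖) {f : H | R f = r} f₀)
    (hf₁ : S f₁ = s ∧ IsMinOn (fun f : H => ‖R f - r‖) {f : H | S f = s} f₁) :
    R (f₀ - f₁) = f₀ - f₁ ∧ S (f₀ - f₁) = f₀ - f₁ := by
  obtain ⟨hRf₀, hmin₀⟩ := hf₀
  obtain ⟨hSf₁, hmin₁⟩ := hf₁
  have hRsym : ∀ x y : H, ⟪R x, y⟫ = ⟪x, R y⟫ :=
    (ContinuousLinearMap.isSelfAdjoint_iff_isSymmetric.mp hR)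
  have hSsym : ∀ x y : H, ⟪S x, y⟫ = ⟪x, S y⟫ :=
    (ContinuousLinearMap.isSelfAdjoint_iff_isSymmetric.mp hS)
  have hRR : ∀ x : H, R (R x) = R x := fun x =>
    congrFun (congrArg DFunLike.coe hRi) x
  have hSS : ∀ x : H, S (S x) = S x := fun x =>
    congrFun (congrArg DFunLike.coe hSi) x
  set d := f₀ - f₁ with hd
  -- first-order condition for f₀
  have orth₀ : ∀ g : H, R g = 0 → ⟪S f₀ - s, S g⟫ = 0 := by
    intro g hg
    apply aux_inner_zero
    intro t
    have hmem : f₀ + t • g ∈ {f : H | R f = r} := by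
      simp [Set.mem_setOf_eq, map_add, map_smul, hg, hRf₀]
    have := hmin₀ hmem
    simpa [map_add, map_smul, add_sub_assoc, smul_smul,
      show S f₀ + t • S g - s = S f₀ - s + t • S g by abel] using this
  have orth₁ : ∀ g : H, S g = 0 → ⟪R f₁ - r, R g⟫ = 0 := by
    intro g hg
    apply aux_inner_zero
    intro t
    have hmem : f₁ + t • g ∈ {f : H | S f = s} := by
      simp [Set.mem_setOf_eq, map_add, map_smul, hg, hSf₁]
    have := hmin₁ hmem
    simpa [map_add, map_smul,
      show R f₁ + t • R g - r = R f₁ - r + t • R g by abel] using this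
  have hSd : S f₀ - s = S d := by rw [hd, map_sub, hSf₁]
  have hRd : R f₁ - r = -(R d) := by rw [hd, map_sub, ← hRf₀]; abel
  set u := d - R d with hu
  set v := d - S d with hv
  have hRu : R u = 0 := by rw [hu, map_sub, hRR]; abel
  have hSv : S v = 0 := by rw [hv, map_sub, hSS]; abel
  -- four orthogonality relations
  have o1 : ⟪S d, u⟫ = 0 := by
    have h := orth₀ u hRu
    rw [hSd] at h
    calc ⟪S d, u⟫ = ⟪S (S d), u⟫ := by rw [hSS]
      _ = ⟪S d, S u⟫ := hSsym _ _
      _ = 0 := h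
  have o2 : ⟪R d, v⟫ = 0 := by
    have h := orth₁ v hSv
    rw [hRd, inner_neg_left, neg_eq_zero] at h
    calc ⟪R d, v⟫ = ⟪R (R d), v⟫ := by rw [hRR]
      _ = ⟪R d, R v⟫ := hRsym _ _
      _ = 0 := h
  have o3 : ⟪S d, v⟫ = 0 := by rw [hSsym, hSv, inner_zero_right]
  have o4 : ⟪R d, u⟫ = 0 := by rw [hRsym, hRu, inner_zero_right]
  have huv : u - v = S d - R d := by rw [hu, hv]; abel
  have hnorm : ⟪u - v, u - v⟫ = 0 := by
    nth_rewrite 1 [huv]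
    simp only [inner_sub_left, inner_sub_right, o1, o2, o3, o4]
    ring
  have huveq : u = v := sub_eq_zero.mp (inner_self_eq_zero.mp hnorm)
  have humem : u ∈ LinearMap.ker (R : H →ₗ[ℝ] H) ⊓ LinearMap.ker (S : H →ₗ[ℝ] H) := by
    refine ⟨?_, ?_⟩
    · exact hRu
    · rw [huveq]; exact hSv
  have hu0 : u = 0 := by
    rw [hker] at humem
    exact humem
  have hv0 : v = 0 := by rw [← huveq]; exact hu0
  constructor
  · have : d - R d = 0 := hu0
    have := sub_eq_zero.mp this
    exact this.symm
  · have : d - S d = 0 := hv0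
    have := sub_eq_zero.mp this
    exact this.symm
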